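/- Let T be a woven based matrix over an abelian group H, and suppose T_2 is obtained from T by applying an elementary extension M_i followed by an inverse elementary extension M_j^{-1}, where i,j ∈ {1,2,3,4}. Then T_2 can also be obtained from T by a sequence in which all inverse extensions apply before extensions: namely, by a single elementary extension, by a single inverse elementary extension, by an inverse elementary extension followed by an elementary extension, or by an isomorphism of woven based matrices. -/

import Mathlib

universe u v

/-- A woven based matrix over an abelian group `H`: parts `G 1, …, G n` with base
elements `s i ∈ G i`, a weaving set `I`, and a skew-symmetric pairing `b` which is a
weaving map on `(G ∪ I) × I`. -/
structure WovenBasedMatrix (α : Type u) (H : Type v) [DecidableEq α] [AddCommGroup H]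
    (n : ℕ) where
  G : Fin n → Finset α
  I : Finset α
  s : Fin n → α
  b : α → α → H
  s_mem : ∀ i, s i ∈ G i
  disjointG : ∀ i j, i ≠ j → Disjoint (G i) (G j)
  disjointI : ∀ i, Disjoint (G i) I
  skew : ∀ a ∈ Finset.univ.biUnion G ∪ I, ∀ a' ∈ Finset.univ.biUnion G ∪ I,
    b a a' = - b a' a
  diag : ∀ a ∈ Finset.univ.biUnion G ∪ I, b a a = 0
  inter_zero : ∀ x ∈ I, ∀ y ∈ I, b x y = 0
  weave_two : ∀ x ∈ I, ∃ i j : Fin n, i ≠ j ∧ b (s i) x ≠ 0 ∧ b (s j) x ≠ 0 ∧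
    b (s i) x = - b (s j) x ∧ ∀ k : Fin n, b (s k) x ≠ 0 → k = i ∨ k = j
  weave_val : ∀ i : Fin n, ∀ g ∈ G i, ∀ x ∈ I, b g x = 0 ∨ b g x = b (s i) x

variable {α : Type u} {H : Type v} [DecidableEq α] [AddCommGroup H] {n : ℕ}

/-- The underlying set `G ∪ I` of a woven based matrix. -/
def WovenBasedMatrix.carrier (T : WovenBasedMatrix α H n) : Finset α :=
  Finset.univ.biUnion T.G ∪ T.I

/-- The effect of the intersection move `I_□(g; x₁, x₂)` on the skew-symmetric map `b`,
where `sj` is the base element of the part containing `g`: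
`b' g xₖ = b sj xₖ - b g xₖ` for `k = 1,2` (and symmetrically), `b' = b` elsewhere. -/
def IMap (b : α → α → H) (sj g x1 x2 : α) : α → α → H := fun a a' =>
  if a = g ∧ (a' = x1 ∨ a' = x2) then b sj a' - b a a'
  else if a' = g ∧ (a = x1 ∨ a = x2) then b a sj - b a a'
  else b a a'

/-- `x₁, x₂` are a `g`-annihilating pair (with `sj` the base element of `g`'s part). -/
def IsGAnn (b : α → α → H) (sj g x1 x2 : α) : Prop :=
  b g x1 + b g x2 = 0 ∧ b sj x1 + b sj x2 = 0

/-- `x₁, x₂` are a `g`-unequal pair (with `sj` the base element of `g`'s part). -/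
def IsGUnequal (b : α → α → H) (sj g x1 x2 : α) : Prop :=
  b g x1 ≠ b g x2 ∧ b sj x1 = b sj x2

/-- `MoveApplicable k b sj g x1 x2`: the intersection move `I_{k+1}(g;x₁,x₂)` is applicable to
the matrix `b`.  Here `k = 0` encodes the move `I₁` (needing a `g`-annihilating pair) and
`k = 1` encodes the move `I₂` (needing a `g`-unequal pair). -/
def MoveApplicable (k : Fin 2) (b : α → α → H) (sj g x1 x2 : α) : Prop :=
  if k = 0 then IsGAnn b sj g x1 x2 else IsGUnequal b sj g x1 x2

/-- The data of an intersection move `I_{sq+1}(g; x₁, x₂)` with `g` in the part `G j`. -/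
structure MoveDatum (α : Type u) (n : ℕ) where
  j : Fin n
  sq : Fin 2
  g : α
  x1 : α
  x2 : α

/-- The move datum refers to an element `g ∈ G j \ {s j}` and a pair of distinct
elements of the weaving set `I`. -/
def MoveDatum.valid (m : MoveDatum α n) (T : WovenBasedMatrix α H n) : Prop :=
  m.g ∈ T.G m.j ∧ m.g ≠ T.s m.j ∧ m.x1 ∈ T.I ∧ m.x2 ∈ T.I ∧ m.x1 ≠ m.x2

/-- Apply a finite sequence of intersection moves (listed in order of application)
to the skew-symmetric map `b`. -/
def applyMoves (s : Fin n → α) : List (MoveDatum α n) → (α → α → H) → (α → α → H)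
  | [], b => b
  | m :: ms, b => applyMoves s ms (IMap b (s m.j) m.g m.x1 m.x2)

/-- A finite sequence of intersection moves is applicable to `b`: each move in turn is
applicable to the result of the previous ones. -/
def movesApplicable (s : Fin n → α) : List (MoveDatum α n) → (α → α → H) → Prop
  | [], _ => True
  | m :: ms, b => MoveApplicable m.sq b (s m.j) m.g m.x1 m.x2 ∧
      movesApplicable s ms (IMap b (s m.j) m.g m.x1 m.x2)

/-- A sequence of intersection moves is reduced if it splits into consecutive blocks,
each block acting on a single element `g` of `G`, with pairwise distinct elements `g`
across blocks, and within each block every element of the weaving set appears in at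
most one move. -/
def ReducedMoves (L : List (MoveDatum α n)) : Prop :=
  ∃ Bs : List (List (MoveDatum α n)),
    L = Bs.flatten ∧
    (∀ B ∈ Bs, ∀ m ∈ B, ∀ m' ∈ B, m.g = m'.g) ∧
    Bs.Pairwise (fun B B' => ∀ m ∈ B, ∀ m' ∈ B', m.g ≠ m'.g) ∧
    (∀ B ∈ Bs, ∀ x : α, (B.countP fun m => decide (m.x1 = x ∨ m.x2 = x)) ≤ 1)

/-- `M_{1,j}`: elementary extension adding a `G j`-annihilating element `g`. -/
def ExtRel1 (T T' : WovenBasedMatrix α H n) : Prop :=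
  ∃ (j : Fin n) (g : α), g ∉ T.carrier ∧
    T'.s = T.s ∧ T'.I = T.I ∧ T'.G j = insert g (T.G j) ∧
    (∀ i : Fin n, i ≠ j → T'.G i = T.G i) ∧
    (∀ a ∈ T.carrier, ∀ a' ∈ T.carrier, T'.b a a' = T.b a a') ∧
    (∀ a ∈ T'.carrier, T'.b g a = 0)

/-- `M_{2,j}`: elementary extension adding a `G j`-core element `g`. -/
def ExtRel2 (T T' : WovenBasedMatrix α H n) : Prop :=
  ∃ (j : Fin n) (g : α), g ∉ T.carrier ∧
    T'.s = T.s ∧ T'.I = T.I ∧ T'.G j = insert g (T.G j) ∧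
    (∀ i : Fin n, i ≠ j → T'.G i = T.G i) ∧
    (∀ a ∈ T.carrier, ∀ a' ∈ T.carrier, T'.b a a' = T.b a a') ∧
    (∀ a ∈ T'.carrier, T'.b g a = T'.b (T'.s j) a)

/-- `M_{3,j}`: elementary extension adding a `G j`-complementary pair `g₁, g₂`. -/
def ExtRel3 (T T' : WovenBasedMatrix α H n) : Prop :=
  ∃ (j : Fin n) (g1 g2 : α), g1 ≠ g2 ∧ g1 ∉ T.carrier ∧ g2 ∉ T.carrier ∧
    T'.s = T.s ∧ T'.I = T.I ∧ T'.G j = insert g1 (insert g2 (T.G j)) ∧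
    (∀ i : Fin n, i ≠ j → T'.G i = T.G i) ∧
    (∀ a ∈ T.carrier, ∀ a' ∈ T.carrier, T'.b a a' = T.b a a') ∧
    (∀ a ∈ T'.carrier, T'.b g1 a + T'.b g2 a = T'.b (T'.s j) a)

/-- `M₄`: elementary extension adding a sum-annihilating pair `x₁, x₂` to the
weaving set. -/
def ExtRel4 (T T' : WovenBasedMatrix α H n) : Prop :=
  ∃ (x1 x2 : α), x1 ≠ x2 ∧ x1 ∉ T.carrier ∧ x2 ∉ T.carrier ∧
    T'.s = T.s ∧ T'.G = T.G ∧ T'.I = insert x1 (insert x2 T.I) ∧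
    (∀ a ∈ T.carrier, ∀ a' ∈ T.carrier, T'.b a a' = T.b a a') ∧
    (∀ a ∈ T'.carrier, T'.b x1 a + T'.b x2 a = 0)

/-- `T'` is obtained from `T` by a single elementary extension; the inverse elementary
extensions are given by the reversed relation. -/
def ExtRel (T T' : WovenBasedMatrix α H n) : Prop :=
  ExtRel1 T T' ∨ ExtRel2 T T' ∨ ExtRel3 T T' ∨ ExtRel4 T T'

/-- `T'` is obtained from `T` by the elementary extension `M_k` (`k ∈ {1,2,3,4}`). -/
def ExtRelAt (k : ℕ) (T T' : WovenBasedMatrix α H n) : Prop :=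
  match k with
  | 1 => ExtRel1 T T'
  | 2 => ExtRel2 T T'
  | 3 => ExtRel3 T T'
  | 4 => ExtRel4 T T'
  | _ => False

/-- Isomorphism of woven based matrices: a bijection of the underlying sets together with
a permutation of the indices, matching base elements, parts, weaving sets and pairings. -/
def IsoRel (T T' : WovenBasedMatrix α H n) : Prop :=
  ∃ (Φ : α → α) (σ : Equiv.Perm (Fin n)),
    Set.BijOn Φ ↑T.carrier ↑T'.carrier ∧
    (∀ i, Φ (T.s i) = T'.s (σ i)) ∧
    (∀ i, (T.G i).image Φ = T'.G (σ i)) ∧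
    T.I.image Φ = T'.I ∧
    (∀ a ∈ T.carrier, ∀ a' ∈ T.carrier, T'.b (Φ a) (Φ a') = T.b a a')

/-- `T'` is obtained from `T` by a single intersection move. -/
def IMoveRel (T T' : WovenBasedMatrix α H n) : Prop :=
  ∃ m : MoveDatum α n, m.valid T ∧
    MoveApplicable m.sq T.b (T.s m.j) m.g m.x1 m.x2 ∧
    T'.G = T.G ∧ T'.I = T.I ∧ T'.s = T.s ∧
    (∀ a ∈ T.carrier, ∀ a' ∈ T.carrier,
      T'.b a a' = IMap T.b (T.s m.j) m.g m.x1 m.x2 a a')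

/-- `T` and `T'` are equal woven based matrices (same parts, base elements, weaving set
and the same pairing on the underlying set). -/
def WBMEq (T T' : WovenBasedMatrix α H n) : Prop :=
  T'.G = T.G ∧ T'.I = T.I ∧ T'.s = T.s ∧
  ∀ a ∈ T.carrier, ∀ a' ∈ T.carrier, T'.b a a' = T.b a a'

/-- One step of the homology relation: an elementary extension, an inverse elementary
extension, an intersection move, or an isomorphism. -/
def HomStep (T T' : WovenBasedMatrix α H n) : Prop :=
  ExtRel T T' ∨ ExtRel T' T ∨ IMoveRel T T' ∨ IsoRel T T'

/-- Two woven based matrices are homologous if they are related by a finite sequence of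
elementary extensions and their inverses, intersection moves, and isomorphisms. -/
def Homologous : WovenBasedMatrix α H n → WovenBasedMatrix α H n → Prop :=
  Relation.ReflTransGen HomStep

/-- No inverse elementary extension applies to `T`: there is no `G i`-annihilating
element, no `G i`-core element, no `G i`-complementary pair, and no sum-annihilating
pair in the weaving set. -/
def NoInverseExtension (T : WovenBasedMatrix α H n) : Prop :=
  (∀ i : Fin n, ∀ g ∈ T.G i, g ≠ T.s i → ¬ (∀ a ∈ T.carrier, T.b g a = 0)) ∧
  (∀ i : Fin n, ∀ g ∈ T.G i, g ≠ T.s i →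
    ¬ (∀ a ∈ T.carrier, T.b g a = T.b (T.s i) a)) ∧
  (∀ i : Fin n, ∀ g1 ∈ T.G i, ∀ g2 ∈ T.G i, g1 ≠ T.s i → g2 ≠ T.s i → g1 ≠ g2 →
    ¬ (∀ a ∈ T.carrier, T.b g1 a + T.b g2 a = T.b (T.s i) a)) ∧
  (∀ x1 ∈ T.I, ∀ x2 ∈ T.I, x1 ≠ x2 → ¬ (∀ a ∈ T.carrier, T.b x1 a + T.b x2 a = 0))

/-- A woven based matrix is primitive if after every finite sequence of intersection
moves, no inverse elementary extension can be applied. -/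
def Primitive (T : WovenBasedMatrix α H n) : Prop :=
  ∀ T' : WovenBasedMatrix α H n, Relation.ReflTransGen IMoveRel T T' →
    NoInverseExtension T'


namespace WovenBasedMatrix

lemma mem_carrier {T : WovenBasedMatrix α H n} {a : α} :
    a ∈ T.carrier ↔ (∃ i, a ∈ T.G i) ∨ a ∈ T.I := by
  simp [carrier]

lemma s_mem_carrier (T : WovenBasedMatrix α H n) (i : Fin n) : T.s i ∈ T.carrier :=
  mem_carrier.mpr (Or.inl ⟨i, T.s_mem i⟩)

lemma G_subset_carrier (T : WovenBasedMatrix α H n) (i : Fin n) : T.G i ⊆ T.carrier :=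
  fun a ha => mem_carrier.mpr (Or.inl ⟨i, ha⟩)

lemma I_subset_carrier (T : WovenBasedMatrix α H n) : T.I ⊆ T.carrier :=
  fun a ha => mem_carrier.mpr (Or.inr ha)

/-- Restriction of a woven based matrix to smaller parts and weaving set. -/
def restrict (T : WovenBasedMatrix α H n) (G' : Fin n → Finset α)
    (I' : Finset α) (hG : ∀ i, G' i ⊆ T.G i) (hI : I' ⊆ T.I)
    (hs : ∀ i, T.s i ∈ G' i) : WovenBasedMatrix α H n where
  G := G'
  I := I'
  s := T.s
  b := T.b
  s_mem := hs
  disjointG := fun i j hij => (T.disjointG i j hij).mono (hG i) (hG j)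
  disjointI := fun i => (T.disjointI i).mono (hG i) hI
  skew := by
    have key : ∀ a ∈ Finset.univ.biUnion G' ∪ I', a ∈ T.carrier := by
      intro a ha
      rcases Finset.mem_union.mp ha with h | h
      · obtain ⟨i, -, hi⟩ := Finset.mem_biUnion.mp h
        exact T.G_subset_carrier i (hG i hi)
      · exact T.I_subset_carrier (hI h)
    exact fun a ha a' ha' => T.skew a (key a ha) a' (key a' ha')
  diag := by
    have key : ∀ a ∈ Finset.univ.biUnion G' ∪ I', a ∈ T.carrier := by
      intro a ha
      rcases Finset.mem_union.mp ha with h | h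
      · obtain ⟨i, -, hi⟩ := Finset.mem_biUnion.mp h
        exact T.G_subset_carrier i (hG i hi)
      · exact T.I_subset_carrier (hI h)
    exact fun a ha => T.diag a (key a ha)
  inter_zero := fun x hx y hy => T.inter_zero x (hI hx) y (hI hy)
  weave_two := fun x hx => T.weave_two x (hI hx)
  weave_val := fun i g hg x hx => T.weave_val i g (hG i hg) x (hI hx)

end WovenBasedMatrix

/-- Generic shape of a `G`-extension adding the set `S` to the part `G j`. -/
structure AddG (T T' : WovenBasedMatrix α H n) (j : Fin n) (S : Finset α) : Prop where
  fresh : ∀ g ∈ S, g ∉ T.carrier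
  hs : T'.s = T.s
  hI : T'.I = T.I
  hGj : T'.G j = S ∪ T.G j
  hGi : ∀ i, i ≠ j → T'.G i = T.G i
  hb : ∀ a ∈ T.carrier, ∀ a' ∈ T.carrier, T'.b a a' = T.b a a'

/-- Generic shape of an `I`-extension adding the set `S` to the weaving set. -/
structure AddI (T T' : WovenBasedMatrix α H n) (S : Finset α) : Prop where
  fresh : ∀ x ∈ S, x ∉ T.carrier
  hs : T'.s = T.s
  hG : T'.G = T.G
  hI : T'.I = S ∪ T.I
  hb : ∀ a ∈ T.carrier, ∀ a' ∈ T.carrier, T'.b a a' = T.b a a'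

lemma AddG.carrier_eq {T T' : WovenBasedMatrix α H n} {j : Fin n} {S : Finset α}
    (h : AddG T T' j S) : T'.carrier = S ∪ T.carrier := by
  ext a
  simp only [WovenBasedMatrix.mem_carrier, Finset.mem_union]
  constructor
  · rintro (⟨i, hi⟩ | hI)
    · by_cases hij : i = j
      · subst hij
        rw [h.hGj] at hi
        rcases Finset.mem_union.mp hi with h' | h'
        · exact Or.inl h'
        · exact Or.inr (Or.inl ⟨i, h'⟩)
      · rw [h.hGi i hij] at hi
        exact Or.inr (Or.inl ⟨i, hi⟩)
    · rw [h.hI] at hI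
      exact Or.inr (Or.inr hI)
  · rintro (hS | (⟨i, hi⟩ | hI))
    · exact Or.inl ⟨j, by rw [h.hGj]; exact Finset.mem_union_left _ hS⟩
    · by_cases hij : i = j
      · subst hij
        exact Or.inl ⟨i, by rw [h.hGj]; exact Finset.mem_union_right _ hi⟩
      · exact Or.inl ⟨i, by rw [h.hGi i hij]; exact hi⟩
    · exact Or.inr (by rw [h.hI]; exact hI)

lemma AddI.carrier_eq {T T' : WovenBasedMatrix α H n} {S : Finset α}
    (h : AddI T T' S) : T'.carrier = S ∪ T.carrier := by
  unfold WovenBasedMatrix.carrier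
  rw [h.hG, h.hI, Finset.union_left_comm]

lemma AddG.carrier_subset {T T' : WovenBasedMatrix α H n} {j : Fin n} {S : Finset α}
    (h : AddG T T' j S) : T.carrier ⊆ T'.carrier := by
  rw [h.carrier_eq]; exact Finset.subset_union_right

lemma AddI.carrier_subset {T T' : WovenBasedMatrix α H n} {S : Finset α}
    (h : AddI T T' S) : T.carrier ⊆ T'.carrier := by
  rw [h.carrier_eq]; exact Finset.subset_union_right

lemma AddG.S_subset {T T' : WovenBasedMatrix α H n} {j : Fin n} {S : Finset α}
    (h : AddG T T' j S) : S ⊆ T'.G j := by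
  rw [h.hGj]; exact Finset.subset_union_left

lemma AddI.S_subset {T T' : WovenBasedMatrix α H n} {S : Finset α}
    (h : AddI T T' S) : S ⊆ T'.I := by
  rw [h.hI]; exact Finset.subset_union_left

lemma AddG.G_subset {T T' : WovenBasedMatrix α H n} {j : Fin n} {S : Finset α}
    (h : AddG T T' j S) : ∀ i, T.G i ⊆ T'.G i := by
  intro i
  by_cases hij : i = j
  · subst hij; rw [h.hGj]; exact Finset.subset_union_right
  · rw [h.hGi i hij]

lemma extRel1_iff {T T' : WovenBasedMatrix α H n} :
    ExtRel1 T T' ↔ ∃ j g, AddG T T' j {g} ∧ ∀ a ∈ T'.carrier, T'.b g a = 0 := by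
  constructor
  · rintro ⟨j, g, hg, hs, hI, hGj, hGi, hb, hside⟩
    exact ⟨j, g, ⟨by simpa using hg, hs, hI, by rw [hGj, Finset.insert_eq], hGi, hb⟩,
      hside⟩
  · rintro ⟨j, g, h, hside⟩
    exact ⟨j, g, h.fresh g (Finset.mem_singleton_self g), h.hs, h.hI,
      by rw [h.hGj, ← Finset.insert_eq], h.hGi, h.hb, hside⟩

lemma extRel2_iff {T T' : WovenBasedMatrix α H n} :
    ExtRel2 T T' ↔ ∃ j g, AddG T T' j {g} ∧ ∀ a ∈ T'.carrier, T'.b g a = T'.b (T'.s j) a := by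
  constructor
  · rintro ⟨j, g, hg, hs, hI, hGj, hGi, hb, hside⟩
    exact ⟨j, g, ⟨by simpa using hg, hs, hI, by rw [hGj, Finset.insert_eq], hGi, hb⟩,
      hside⟩
  · rintro ⟨j, g, h, hside⟩
    exact ⟨j, g, h.fresh g (Finset.mem_singleton_self g), h.hs, h.hI,
      by rw [h.hGj, ← Finset.insert_eq], h.hGi, h.hb, hside⟩

lemma extRel3_iff {T T' : WovenBasedMatrix α H n} :
    ExtRel3 T T' ↔ ∃ j g1 g2, g1 ≠ g2 ∧ AddG T T' j {g1, g2} ∧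
      ∀ a ∈ T'.carrier, T'.b g1 a + T'.b g2 a = T'.b (T'.s j) a := by
  constructor
  · rintro ⟨j, g1, g2, hne, hg1, hg2, hs, hI, hGj, hGi, hb, hside⟩
    refine ⟨j, g1, g2, hne, ⟨?_, hs, hI, ?_, hGi, hb⟩, hside⟩
    · intro g hg
      rcases Finset.mem_insert.mp hg with rfl | hg
      · exact hg1
      · rw [Finset.mem_singleton.mp hg]; exact hg2
    · rw [hGj, Finset.insert_union, Finset.insert_eq g2]
  · rintro ⟨j, g1, g2, hne, h, hside⟩
    exact ⟨j, g1, g2, hne, h.fresh g1 (Finset.mem_insert_self _ _),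
      h.fresh g2 (Finset.mem_insert_of_mem (Finset.mem_singleton_self _)), h.hs, h.hI,
      by rw [h.hGj, Finset.insert_union, ← Finset.insert_eq], h.hGi, h.hb, hside⟩

lemma extRel4_iff {T T' : WovenBasedMatrix α H n} :
    ExtRel4 T T' ↔ ∃ x1 x2, x1 ≠ x2 ∧ AddI T T' {x1, x2} ∧
      ∀ a ∈ T'.carrier, T'.b x1 a + T'.b x2 a = 0 := by
  constructor
  · rintro ⟨x1, x2, hne, hx1, hx2, hs, hG, hI, hb, hside⟩
    refine ⟨x1, x2, hne, ⟨?_, hs, hG, ?_, hb⟩, hside⟩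
    · intro x hx
      rcases Finset.mem_insert.mp hx with rfl | hx
      · exact hx1
      · rw [Finset.mem_singleton.mp hx]; exact hx2
    · rw [hI, Finset.insert_union, Finset.insert_eq x2]
  · rintro ⟨x1, x2, hne, h, hside⟩
    exact ⟨x1, x2, hne, h.fresh x1 (Finset.mem_insert_self _ _),
      h.fresh x2 (Finset.mem_insert_of_mem (Finset.mem_singleton_self _)), h.hs, h.hG,
      by rw [h.hI, Finset.insert_union, ← Finset.insert_eq], h.hb, hside⟩

open WovenBasedMatrix in
lemma diamondGG {T T1 T2 : WovenBasedMatrix α H n} {j j' : Fin n} {S S' : Finset α}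
    (h1 : AddG T T1 j S) (h2 : AddG T2 T1 j' S') (hdis : ∀ a ∈ S, a ∉ S') :
    ∃ T3 : WovenBasedMatrix α H n, T3.b = T1.b ∧ AddG T3 T j' S' ∧ AddG T3 T2 j S := by
  have hS'G : S' ⊆ T.G j' := by
    intro x hx
    have hx1 : x ∈ T1.G j' := h2.S_subset hx
    by_cases hjj : j' = j
    · subst hjj
      rw [h1.hGj] at hx1
      rcases Finset.mem_union.mp hx1 with h | h
      · exact absurd hx (hdis x h)
      · exact h
    · rwa [h1.hGi j' hjj] at hx1
  have hsS' : ∀ i, T1.s i ∉ S' := by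
    intro i hx
    exact h2.fresh _ hx (h2.hs ▸ T2.s_mem_carrier i)
  have hdisS' : ∀ i, i ≠ j' → Disjoint (T.G i) S' :=
    fun i hij => Finset.disjoint_right.mpr fun x hx => Finset.disjoint_right.mp
      (T.disjointG i j' hij) (hS'G hx)
  refine ⟨T1.restrict (fun i => T.G i \ S') T.I
      (fun i => Finset.sdiff_subset.trans (h1.G_subset i)) h1.hI.ge
      (fun i => Finset.mem_sdiff.mpr ⟨by rw [h1.hs]; exact T.s_mem i, hsS' i⟩),
    rfl, ?_, ?_⟩
  all_goals
    have hsub3T : ∀ a, a ∈ (Finset.univ.biUnion fun i => T.G i \ S') ∪ T.I →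
        a ∈ T.carrier := by
      intro a ha
      rcases Finset.mem_union.mp ha with h | h
      · obtain ⟨i, -, hi⟩ := Finset.mem_biUnion.mp h
        exact T.G_subset_carrier i (Finset.mem_sdiff.mp hi).1
      · exact T.I_subset_carrier h
    have hnS' : ∀ a, a ∈ (Finset.univ.biUnion fun i => T.G i \ S') ∪ T.I → a ∉ S' := by
      intro a ha haS'
      rcases Finset.mem_union.mp ha with h | h
      · obtain ⟨i, -, hi⟩ := Finset.mem_biUnion.mp h
        exact (Finset.mem_sdiff.mp hi).2 haS'
      · exact Finset.disjoint_left.mp (T.disjointI j') (hS'G haS') h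
  · -- AddG T3 T j' S'
    refine ⟨?_, h1.hs.symm, rfl, (Finset.union_sdiff_of_subset hS'G).symm, ?_, ?_⟩
    · intro x hx hmem
      exact hnS' x hmem hx
    · intro i hij
      exact (Finset.sdiff_eq_self_of_disjoint (hdisS' i hij)).symm
    · intro a ha a' ha'
      exact (h1.hb a (hsub3T a ha) a' (hsub3T a' ha')).symm
  · -- AddG T3 T2 j S
    have hT2j' : T2.G j' = T1.G j' \ S' := by
      rw [h2.hGj, Finset.union_sdiff_cancel_left]
      exact Finset.disjoint_left.mpr fun x hx => fun hx2 =>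
        h2.fresh x hx (T2.G_subset_carrier j' hx2)
    have hsub3T2 : ∀ a, a ∈ (Finset.univ.biUnion fun i => T.G i \ S') ∪ T.I →
        a ∈ T2.carrier := by
      intro a ha
      have h1a : a ∈ T1.carrier := h1.carrier_subset (hsub3T a ha)
      rw [h2.carrier_eq] at h1a
      exact (Finset.mem_union.mp h1a).resolve_left (hnS' a ha)
    refine ⟨?_, h2.hs.symm, h2.hI.symm.trans h1.hI, ?_, ?_, ?_⟩
    · intro x hx hmem
      exact h1.fresh x hx (hsub3T x hmem)
    · -- T2.G j = S ∪ (T.G j \ S')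
      show T2.G j = S ∪ (T.G j \ S')
      by_cases hjj : j = j'
      · subst hjj
        rw [hT2j', h1.hGj, Finset.union_sdiff_distrib,
          Finset.sdiff_eq_self_of_disjoint (Finset.disjoint_left.mpr hdis)]
      · rw [← h2.hGi j hjj]
        rw [h1.hGj]
        rw [Finset.sdiff_eq_self_of_disjoint (hdisS' j hjj)]
    · intro i hij
      show T2.G i = T.G i \ S'
      by_cases hij' : i = j'
      · subst hij'
        rw [hT2j', h1.hGi _ hij]
      · rw [← h2.hGi i hij']
        rw [h1.hGi i hij]
        rw [Finset.sdiff_eq_self_of_disjoint (hdisS' i hij')]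
    · intro a ha a' ha'
      exact (h2.hb a (hsub3T2 a ha) a' (hsub3T2 a' ha')).symm

open WovenBasedMatrix in
lemma diamondGI {T T1 T2 : WovenBasedMatrix α H n} {j : Fin n} {S S' : Finset α}
    (h1 : AddG T T1 j S) (h2 : AddI T2 T1 S') :
    ∃ T3 : WovenBasedMatrix α H n, T3.b = T1.b ∧ AddI T3 T S' ∧ AddG T3 T2 j S := by
  have hS'I : S' ⊆ T.I := by
    intro x hx
    have : x ∈ T1.I := h2.S_subset hx
    rwa [h1.hI] at this
  refine ⟨T1.restrict T.G (T.I \ S') h1.G_subset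
      (Finset.sdiff_subset.trans h1.hI.ge)
      (fun i => by rw [h1.hs]; exact T.s_mem i),
    rfl, ?_, ?_⟩
  all_goals
    have hsub3T : ∀ a, a ∈ Finset.univ.biUnion T.G ∪ (T.I \ S') → a ∈ T.carrier := by
      intro a ha
      rcases Finset.mem_union.mp ha with h | h
      · obtain ⟨i, -, hi⟩ := Finset.mem_biUnion.mp h
        exact T.G_subset_carrier i hi
      · exact T.I_subset_carrier (Finset.mem_sdiff.mp h).1
    have hnS' : ∀ a, a ∈ Finset.univ.biUnion T.G ∪ (T.I \ S') → a ∉ S' := by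
      intro a ha haS'
      rcases Finset.mem_union.mp ha with h | h
      · obtain ⟨i, -, hi⟩ := Finset.mem_biUnion.mp h
        exact Finset.disjoint_left.mp (T.disjointI i) hi (hS'I haS')
      · exact (Finset.mem_sdiff.mp h).2 haS'
  · -- AddI T3 T S'
    refine ⟨fun x hx hmem => hnS' x hmem hx, h1.hs.symm, rfl,
      (Finset.union_sdiff_of_subset hS'I).symm, ?_⟩
    intro a ha a' ha'
    exact (h1.hb a (hsub3T a ha) a' (hsub3T a' ha')).symm
  · -- AddG T3 T2 j S
    have hsub3T2 : ∀ a, a ∈ Finset.univ.biUnion T.G ∪ (T.I \ S') → a ∈ T2.carrier := by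
      intro a ha
      have h1a : a ∈ T1.carrier := h1.carrier_subset (hsub3T a ha)
      rw [h2.carrier_eq] at h1a
      exact (Finset.mem_union.mp h1a).resolve_left (hnS' a ha)
    refine ⟨fun x hx hmem => h1.fresh x hx (hsub3T x hmem), h2.hs.symm, ?_, ?_, ?_, ?_⟩
    · -- T2.I = T.I \ S'
      show T2.I = T.I \ S'
      have : T2.I = T1.I \ S' := by
        rw [h2.hI, Finset.union_sdiff_cancel_left]
        exact Finset.disjoint_left.mpr fun x hx hx2 =>
          h2.fresh x hx (T2.I_subset_carrier hx2)
      rw [this, h1.hI]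
    · show T2.G j = S ∪ T.G j
      rw [← congrFun h2.hG j, h1.hGj]
    · intro i hij
      show T2.G i = T.G i
      rw [← congrFun h2.hG i, h1.hGi i hij]
    · intro a ha a' ha'
      exact (h2.hb a (hsub3T2 a ha) a' (hsub3T2 a' ha')).symm

open WovenBasedMatrix in
lemma diamondIG {T T1 T2 : WovenBasedMatrix α H n} {j' : Fin n} {S S' : Finset α}
    (h1 : AddI T T1 S) (h2 : AddG T2 T1 j' S') :
    ∃ T3 : WovenBasedMatrix α H n, T3.b = T1.b ∧ AddG T3 T j' S' ∧ AddI T3 T2 S := by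
  have hS'G : S' ⊆ T.G j' := by
    intro x hx
    have : x ∈ T1.G j' := h2.S_subset hx
    rwa [congrFun h1.hG j'] at this
  have hsS' : ∀ i, T1.s i ∉ S' := fun i hx => h2.fresh _ hx (h2.hs ▸ T2.s_mem_carrier i)
  have hdisS' : ∀ i, i ≠ j' → Disjoint (T.G i) S' :=
    fun i hij => Finset.disjoint_right.mpr fun x hx => Finset.disjoint_right.mp
      (T.disjointG i j' hij) (hS'G hx)
  refine ⟨T1.restrict (fun i => T.G i \ S') T.I
      (fun i => Finset.sdiff_subset.trans (congrFun h1.hG i).ge)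
      (by rw [h1.hI]; exact Finset.subset_union_right)
      (fun i => Finset.mem_sdiff.mpr ⟨by rw [h1.hs]; exact T.s_mem i, hsS' i⟩),
    rfl, ?_, ?_⟩
  all_goals
    have hsub3T : ∀ a, a ∈ (Finset.univ.biUnion fun i => T.G i \ S') ∪ T.I →
        a ∈ T.carrier := by
      intro a ha
      rcases Finset.mem_union.mp ha with h | h
      · obtain ⟨i, -, hi⟩ := Finset.mem_biUnion.mp h
        exact T.G_subset_carrier i (Finset.mem_sdiff.mp hi).1
      · exact T.I_subset_carrier h
    have hnS' : ∀ a, a ∈ (Finset.univ.biUnion fun i => T.G i \ S') ∪ T.I → a ∉ S' := by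
      intro a ha haS'
      rcases Finset.mem_union.mp ha with h | h
      · obtain ⟨i, -, hi⟩ := Finset.mem_biUnion.mp h
        exact (Finset.mem_sdiff.mp hi).2 haS'
      · exact Finset.disjoint_left.mp (T.disjointI j') (hS'G haS') h
  · -- AddG T3 T j' S'
    refine ⟨fun x hx hmem => hnS' x hmem hx, h1.hs.symm, rfl,
      (Finset.union_sdiff_of_subset hS'G).symm, ?_, ?_⟩
    · intro i hij
      exact (Finset.sdiff_eq_self_of_disjoint (hdisS' i hij)).symm
    · intro a ha a' ha'
      exact (h1.hb a (hsub3T a ha) a' (hsub3T a' ha')).symm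
  · -- AddI T3 T2 S
    have hT2j' : T2.G j' = T1.G j' \ S' := by
      rw [h2.hGj, Finset.union_sdiff_cancel_left]
      exact Finset.disjoint_left.mpr fun x hx hx2 =>
        h2.fresh x hx (T2.G_subset_carrier j' hx2)
    have hsub3T2 : ∀ a, a ∈ (Finset.univ.biUnion fun i => T.G i \ S') ∪ T.I →
        a ∈ T2.carrier := by
      intro a ha
      have h1a : a ∈ T1.carrier := h1.carrier_subset (hsub3T a ha)
      rw [h2.carrier_eq] at h1a
      exact (Finset.mem_union.mp h1a).resolve_left (hnS' a ha)
    refine ⟨fun x hx hmem => h1.fresh x hx (hsub3T x hmem), h2.hs.symm, ?_, ?_, ?_⟩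
    · -- T2.G = T3.G
      funext i
      show T2.G i = T.G i \ S'
      by_cases hij' : i = j'
      · subst hij'
        rw [hT2j', congrFun h1.hG i]
      · rw [← h2.hGi i hij', congrFun h1.hG i,
          Finset.sdiff_eq_self_of_disjoint (hdisS' i hij')]
    · show T2.I = S ∪ T.I
      rw [← h2.hI, h1.hI]
    · intro a ha a' ha'
      exact (h2.hb a (hsub3T2 a ha) a' (hsub3T2 a' ha')).symm

open WovenBasedMatrix in
lemma diamondII {T T1 T2 : WovenBasedMatrix α H n} {S S' : Finset α}
    (h1 : AddI T T1 S) (h2 : AddI T2 T1 S') (hdis : ∀ a ∈ S, a ∉ S') :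
    ∃ T3 : WovenBasedMatrix α H n, T3.b = T1.b ∧ AddI T3 T S' ∧ AddI T3 T2 S := by
  have hS'I : S' ⊆ T.I := by
    intro x hx
    have hx1 : x ∈ T1.I := h2.S_subset hx
    rw [h1.hI] at hx1
    rcases Finset.mem_union.mp hx1 with h | h
    · exact absurd hx (hdis x h)
    · exact h
  refine ⟨T1.restrict T.G (T.I \ S')
      (fun i => (congrFun h1.hG i).ge)
      (Finset.sdiff_subset.trans (by rw [h1.hI]; exact Finset.subset_union_right))
      (fun i => by rw [h1.hs]; exact T.s_mem i),
    rfl, ?_, ?_⟩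
  all_goals
    have hsub3T : ∀ a, a ∈ Finset.univ.biUnion T.G ∪ (T.I \ S') → a ∈ T.carrier := by
      intro a ha
      rcases Finset.mem_union.mp ha with h | h
      · obtain ⟨i, -, hi⟩ := Finset.mem_biUnion.mp h
        exact T.G_subset_carrier i hi
      · exact T.I_subset_carrier (Finset.mem_sdiff.mp h).1
    have hnS' : ∀ a, a ∈ Finset.univ.biUnion T.G ∪ (T.I \ S') → a ∉ S' := by
      intro a ha haS'
      rcases Finset.mem_union.mp ha with h | h
      · obtain ⟨i, -, hi⟩ := Finset.mem_biUnion.mp h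
        exact Finset.disjoint_left.mp (T.disjointI i) hi (hS'I haS')
      · exact (Finset.mem_sdiff.mp h).2 haS'
  · -- AddI T3 T S'
    refine ⟨fun x hx hmem => hnS' x hmem hx, h1.hs.symm, rfl,
      (Finset.union_sdiff_of_subset hS'I).symm, ?_⟩
    intro a ha a' ha'
    exact (h1.hb a (hsub3T a ha) a' (hsub3T a' ha')).symm
  · -- AddI T3 T2 S
    have hsub3T2 : ∀ a, a ∈ Finset.univ.biUnion T.G ∪ (T.I \ S') → a ∈ T2.carrier := by
      intro a ha
      have h1a : a ∈ T1.carrier := h1.carrier_subset (hsub3T a ha)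
      rw [h2.carrier_eq] at h1a
      exact (Finset.mem_union.mp h1a).resolve_left (hnS' a ha)
    refine ⟨fun x hx hmem => h1.fresh x hx (hsub3T x hmem), h2.hs.symm, ?_, ?_, ?_⟩
    · show T2.G = T.G
      rw [← h2.hG, h1.hG]
    · show T2.I = S ∪ (T.I \ S')
      have hT2I : T2.I = T1.I \ S' := by
        rw [h2.hI, Finset.union_sdiff_cancel_left]
        exact Finset.disjoint_left.mpr fun x hx hx2 =>
          h2.fresh x hx (T2.I_subset_carrier hx2)
      rw [hT2I, h1.hI, Finset.union_sdiff_distrib,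
        Finset.sdiff_eq_self_of_disjoint (Finset.disjoint_left.mpr hdis)]
    · intro a ha a' ha'
      exact (h2.hb a (hsub3T2 a ha) a' (hsub3T2 a' ha')).symm
open WovenBasedMatrix in
lemma isoRel_of_eq {T T2 : WovenBasedMatrix α H n} (hG : T2.G = T.G) (hI : T2.I = T.I)
    (hs : T2.s = T.s)
    (hb : ∀ a ∈ T.carrier, ∀ a' ∈ T.carrier, T2.b a a' = T.b a a') : IsoRel T T2 := by
  have hc : T2.carrier = T.carrier := by
    unfold WovenBasedMatrix.carrier
    rw [hG, hI]
  refine ⟨id, Equiv.refl _, ?_, fun i => (congrFun hs i).symm,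
    fun i => by simp [hG], by simp [hI], fun a ha a' ha' => hb a ha a' ha'⟩
  rw [hc]
  exact Set.bijOn_id _

lemma image_swap_of_mem {F : Finset α} {d p : α} (hd : d ∈ F) (hp : p ∉ F) :
    F.image (Equiv.swap d p) = insert p (F.erase d) := by
  ext a
  simp only [Finset.mem_image, Finset.mem_insert, Finset.mem_erase]
  constructor
  · rintro ⟨x, hx, rfl⟩
    by_cases hxd : x = d
    · subst hxd; rw [Equiv.swap_apply_left]; exact Or.inl rfl
    · have hxp : x ≠ p := fun h => hp (h ▸ hx)
      rw [Equiv.swap_apply_of_ne_of_ne hxd hxp]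
      exact Or.inr ⟨hxd, hx⟩
  · rintro (rfl | ⟨had, ha⟩)
    · exact ⟨d, hd, Equiv.swap_apply_left d a⟩
    · have hap : a ≠ p := fun h => hp (h ▸ ha)
      exact ⟨a, ha, Equiv.swap_apply_of_ne_of_ne had hap⟩

lemma image_swap_of_not_mem {F : Finset α} {d p : α} (hd : d ∉ F) (hp : p ∉ F) :
    F.image (Equiv.swap d p) = F := by
  ext a
  simp only [Finset.mem_image]
  constructor
  · rintro ⟨x, hx, rfl⟩
    have hxd : x ≠ d := fun h => hd (h ▸ hx)
    have hxp : x ≠ p := fun h => hp (h ▸ hx)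
    rw [Equiv.swap_apply_of_ne_of_ne hxd hxp]
    exact hx
  · intro ha
    have had : a ≠ d := fun h => hd (h ▸ ha)
    have hap : a ≠ p := fun h => hp (h ▸ ha)
    exact ⟨a, ha, Equiv.swap_apply_of_ne_of_ne had hap⟩

open WovenBasedMatrix in
lemma isoRel_of_swap {T T2 : WovenBasedMatrix α H n} (d p : α)
    (hdT2 : d ∉ T2.carrier)
    (hpT : p ∉ T.carrier)
    (hs : T2.s = T.s)
    (hG : ∀ i, T2.G i = if d ∈ T.G i then insert p ((T.G i).erase d) else T.G i)
    (hI : T2.I = if d ∈ T.I then insert p (T.I.erase d) else T.I)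
    (hb : ∀ a ∈ T.carrier, ∀ a' ∈ T.carrier,
      T2.b (Equiv.swap d p a) (Equiv.swap d p a') = T.b a a') :
    IsoRel T T2 := by
  have himg : ∀ F : Finset α, p ∉ F →
      F.image (Equiv.swap d p) = if d ∈ F then insert p (F.erase d) else F := by
    intro F hpF
    by_cases hdF : d ∈ F
    · rw [if_pos hdF]; exact image_swap_of_mem hdF hpF
    · rw [if_neg hdF]; exact image_swap_of_not_mem hdF hpF
  have hGimg : ∀ i, (T.G i).image (Equiv.swap d p) = T2.G i := by
    intro i
    rw [himg _ (fun h => hpT (T.G_subset_carrier i h)), hG i]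
  have hIimg : T.I.image (Equiv.swap d p) = T2.I := by
    rw [himg _ (fun h => hpT (T.I_subset_carrier h)), hI]
  have hcimg : T.carrier.image (Equiv.swap d p) = T2.carrier := by
    unfold WovenBasedMatrix.carrier
    rw [Finset.image_union, Finset.biUnion_image]
    congr 1
    exact Finset.biUnion_congr rfl fun i _ => hGimg i
  refine ⟨Equiv.swap d p, Equiv.refl _, ?_, ?_, hGimg, hIimg, hb⟩
  · have : (↑T2.carrier : Set α) = Equiv.swap d p '' ↑T.carrier := by
      rw [← hcimg, Finset.coe_image]
    rw [this]
    exact (Equiv.injective _).injOn.bijOn_image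
  · intro i
    have hd : T.s i ≠ d := fun h => hdT2 (h ▸ hs ▸ T2.s_mem_carrier i)
    have hp : T.s i ≠ p := fun h => hpT (h ▸ T.s_mem_carrier i)
    rw [Equiv.swap_apply_of_ne_of_ne hd hp, hs]
    rfl
open WovenBasedMatrix in
lemma iso_of_addG_addG {T T1 T2 : WovenBasedMatrix α H n} {j j' : Fin n} {S : Finset α}
    (h1 : AddG T T1 j S) (h2 : AddG T2 T1 j' S) (hS : S.Nonempty) : IsoRel T T2 := by
  obtain ⟨x, hx⟩ := hS
  have hjj : j = j' := by
    by_contra hne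
    exact Finset.disjoint_left.mp (T1.disjointG j j' hne) (h1.S_subset hx) (h2.S_subset hx)
  subst hjj
  have hsub2 : ∀ a ∈ T.carrier, a ∈ T2.carrier := by
    intro a ha
    have h1a : a ∈ T1.carrier := h1.carrier_subset ha
    rw [h2.carrier_eq] at h1a
    exact (Finset.mem_union.mp h1a).resolve_left fun hS => h1.fresh a hS ha
  refine isoRel_of_eq ?_ (h2.hI.symm.trans h1.hI) (h2.hs.symm.trans h1.hs) ?_
  · funext i
    by_cases hij : i = j
    · subst hij
      have e1 : T.G i = T1.G i \ S := by
        rw [h1.hGj, Finset.union_sdiff_cancel_left]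
        exact Finset.disjoint_left.mpr fun a haS ha => h1.fresh a haS (T.G_subset_carrier i ha)
      have e2 : T2.G i = T1.G i \ S := by
        rw [h2.hGj, Finset.union_sdiff_cancel_left]
        exact Finset.disjoint_left.mpr fun a haS ha => h2.fresh a haS (T2.G_subset_carrier i ha)
      rw [e1, e2]
    · rw [← h2.hGi i hij, h1.hGi i hij]
  · intro a ha a' ha'
    exact (h2.hb a (hsub2 a ha) a' (hsub2 a' ha')).symm.trans (h1.hb a ha a' ha')

open WovenBasedMatrix in
lemma iso_of_addI_addI {T T1 T2 : WovenBasedMatrix α H n} {S : Finset α}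
    (h1 : AddI T T1 S) (h2 : AddI T2 T1 S) : IsoRel T T2 := by
  have hsub2 : ∀ a ∈ T.carrier, a ∈ T2.carrier := by
    intro a ha
    have h1a : a ∈ T1.carrier := h1.carrier_subset ha
    rw [h2.carrier_eq] at h1a
    exact (Finset.mem_union.mp h1a).resolve_left fun hS => h1.fresh a hS ha
  refine isoRel_of_eq (h2.hG.symm.trans h1.hG) ?_ (h2.hs.symm.trans h1.hs) ?_
  · have e1 : T.I = T1.I \ S := by
      rw [h1.hI, Finset.union_sdiff_cancel_left]
      exact Finset.disjoint_left.mpr fun a haS ha => h1.fresh a haS (T.I_subset_carrier ha)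
    have e2 : T2.I = T1.I \ S := by
      rw [h2.hI, Finset.union_sdiff_cancel_left]
      exact Finset.disjoint_left.mpr fun a haS ha => h2.fresh a haS (T2.I_subset_carrier ha)
    rw [e1, e2]
  · intro a ha a' ha'
    exact (h2.hb a (hsub2 a ha) a' (hsub2 a' ha')).symm.trans (h1.hb a ha a' ha')

open WovenBasedMatrix in
lemma single_pair_overlap {T T1 T2 : WovenBasedMatrix α H n} {j j' : Fin n} {c d : α}
    (hcd : c ≠ d) (h1 : AddG T T1 j {c}) (h2 : AddG T2 T1 j' {c, d}) :
    AddG T2 T j' {d} := by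
  have hjj : j = j' := by
    by_contra hne
    exact Finset.disjoint_left.mp (T1.disjointG j j' hne)
      (h1.S_subset (Finset.mem_singleton_self c)) (h2.S_subset (by simp))
  subst hjj
  have hcT : c ∉ T.carrier := h1.fresh c (Finset.mem_singleton_self c)
  have hcT2 : c ∉ T2.carrier := h2.fresh c (by simp)
  have hdT2 : d ∉ T2.carrier := h2.fresh d (by simp)
  have hsub2 : ∀ a ∈ T2.carrier, a ∈ T.carrier := by
    intro a ha
    have h1a : a ∈ T1.carrier := h2.carrier_subset ha
    rw [h1.carrier_eq] at h1a
    refine (Finset.mem_union.mp h1a).resolve_left fun hS => ?_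
    rw [Finset.mem_singleton.mp hS] at ha
    exact hcT2 ha
  refine ⟨fun x hx => by rw [Finset.mem_singleton.mp hx]; exact hdT2,
    h1.hs.symm.trans h2.hs, h1.hI.symm.trans h2.hI, ?_, ?_, ?_⟩
  · -- T.G j = {d} ∪ T2.G j
    ext a
    simp only [Finset.mem_union, Finset.mem_singleton]
    constructor
    · intro ha
      have ha1 : a ∈ T1.G j := h1.G_subset j ha
      rw [h2.hGj] at ha1
      rcases Finset.mem_union.mp ha1 with h | h
      · rcases Finset.mem_insert.mp h with rfl | h
        · exact absurd (T.G_subset_carrier j ha) hcT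
        · exact Or.inl (Finset.mem_singleton.mp h)
      · exact Or.inr h
    · rintro (rfl | ha)
      · have hd1 : a ∈ T1.G j := h2.S_subset (by simp)
        rw [h1.hGj] at hd1
        rcases Finset.mem_union.mp hd1 with h | h
        · exact absurd (Finset.mem_singleton.mp h).symm hcd
        · exact h
      · have ha1 : a ∈ T1.G j := h2.G_subset j ha
        rw [h1.hGj] at ha1
        rcases Finset.mem_union.mp ha1 with h | h
        · rw [Finset.mem_singleton.mp h] at ha
          exact absurd (T2.G_subset_carrier j ha) hcT2
        · exact h
  · intro i hij
    rw [← h2.hGi i hij, h1.hGi i hij]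
  · intro a ha a' ha'
    exact (h1.hb a (hsub2 a ha) a' (hsub2 a' ha')).symm.trans (h2.hb a ha a' ha')
open WovenBasedMatrix in
lemma overlapGG_one {T T1 T2 : WovenBasedMatrix α H n} {j j' : Fin n} {p c d : α}
    (hpc : p ≠ c) (hcd : c ≠ d) (hpd : p ≠ d)
    (h1 : AddG T T1 j {p, c}) (h2 : AddG T2 T1 j' {c, d})
    (hsum1 : ∀ a ∈ T1.carrier, T1.b p a + T1.b c a = T1.b (T1.s j) a)
    (hsum2 : ∀ a ∈ T1.carrier, T1.b c a + T1.b d a = T1.b (T1.s j') a) :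
    IsoRel T T2 := by
  have hjj : j = j' := by
    by_contra hne
    exact Finset.disjoint_left.mp (T1.disjointG j j' hne)
      (h1.S_subset (show c ∈ ({p, c} : Finset α) by simp))
      (h2.S_subset (show c ∈ ({c, d} : Finset α) by simp))
  subst hjj
  have hpT : p ∉ T.carrier := h1.fresh p (by simp)
  have hcT : c ∉ T.carrier := h1.fresh c (by simp)
  have hcT2 : c ∉ T2.carrier := h2.fresh c (by simp)
  have hdT2 : d ∉ T2.carrier := h2.fresh d (by simp)
  have hdG1 : d ∈ T1.G j := h2.S_subset (show d ∈ ({c, d} : Finset α) by simp)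
  have hpG1 : p ∈ T1.G j := h1.S_subset (show p ∈ ({p, c} : Finset α) by simp)
  have hdGT : d ∈ T.G j := by
    have := hdG1
    rw [h1.hGj] at this
    rcases Finset.mem_union.mp this with h | h
    · rcases Finset.mem_insert.mp h with h | h
      · exact absurd h.symm hpd
      · exact absurd (Finset.mem_singleton.mp h).symm hcd
    · exact h
  have hpG2 : p ∈ T2.G j := by
    have := hpG1
    rw [h2.hGj] at this
    rcases Finset.mem_union.mp this with h | h
    · rcases Finset.mem_insert.mp h with h | h
      · exact absurd h hpc
      · exact absurd (Finset.mem_singleton.mp h) hpd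
    · exact h
  have hp1 : p ∈ T1.carrier := T1.G_subset_carrier j hpG1
  have hd1 : d ∈ T1.carrier := T1.G_subset_carrier j hdG1
  have hkey : ∀ x ∈ T1.carrier, T1.b p x = T1.b d x := by
    intro x hx
    have e1 : T1.b p x = T1.b (T1.s j) x - T1.b c x := eq_sub_of_add_eq (hsum1 x hx)
    have e2 : T1.b d x = T1.b (T1.s j) x - T1.b c x := eq_sub_of_add_eq' (hsum2 x hx)
    exact e1.trans e2.symm
  have hkey2 : ∀ x ∈ T1.carrier, T1.b x p = T1.b x d := by
    intro x hx
    rw [T1.skew x hx p hp1, T1.skew x hx d hd1, hkey x hx]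
  have hmap : ∀ a ∈ T.carrier, Equiv.swap d p a ∈ T2.carrier := by
    intro a ha
    by_cases had : a = d
    · subst had
      rw [Equiv.swap_apply_left]
      exact T2.G_subset_carrier j hpG2
    · have hap : a ≠ p := fun h => hpT (h ▸ ha)
      rw [Equiv.swap_apply_of_ne_of_ne had hap]
      have h1a : a ∈ T1.carrier := h1.carrier_subset ha
      rw [h2.carrier_eq] at h1a
      refine (Finset.mem_union.mp h1a).resolve_left fun hS => ?_
      rcases Finset.mem_insert.mp hS with rfl | hS
      · exact hcT ha
      · exact had (Finset.mem_singleton.mp hS)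
  have hswap_inv : ∀ a ∈ T.carrier, ∀ a' ∈ T.carrier,
      T1.b (Equiv.swap d p a) (Equiv.swap d p a') = T1.b a a' := by
    intro a ha a' ha'
    have ha1 : a ∈ T1.carrier := h1.carrier_subset ha
    have ha1' : a' ∈ T1.carrier := h1.carrier_subset ha'
    have hap : a ≠ p := fun h => hpT (h ▸ ha)
    have hap' : a' ≠ p := fun h => hpT (h ▸ ha')
    by_cases had : a = d
    · by_cases had' : a' = d
      · rw [had, had', Equiv.swap_apply_left, T1.diag p hp1, T1.diag d hd1]
      · rw [had, Equiv.swap_apply_left, Equiv.swap_apply_of_ne_of_ne had' hap',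
          hkey a' ha1']
    · rw [Equiv.swap_apply_of_ne_of_ne had hap]
      by_cases had' : a' = d
      · rw [had', Equiv.swap_apply_left, hkey2 a ha1]
      · rw [Equiv.swap_apply_of_ne_of_ne had' hap']
  refine isoRel_of_swap d p hdT2 hpT (h2.hs.symm.trans h1.hs) ?_ ?_ ?_
  · intro i
    by_cases hij : i = j
    · subst hij
      rw [if_pos hdGT]
      ext a
      simp only [Finset.mem_insert, Finset.mem_erase]
      constructor
      · intro ha
        have ha1 : a ∈ T1.G i := h2.G_subset i ha
        have hac : a ≠ c := fun h => hcT2 (h ▸ T2.G_subset_carrier i ha)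
        have had : a ≠ d := fun h => hdT2 (h ▸ T2.G_subset_carrier i ha)
        rw [h1.hGj] at ha1
        rcases Finset.mem_union.mp ha1 with h | h
        · rcases Finset.mem_insert.mp h with rfl | h
          · exact Or.inl rfl
          · exact absurd (Finset.mem_singleton.mp h) hac
        · exact Or.inr ⟨had, h⟩
      · rintro (rfl | ⟨had, ha⟩)
        · exact hpG2
        · have ha1 : a ∈ T1.G i := h1.G_subset i ha
          have hac : a ≠ c := fun h => hcT (h ▸ T.G_subset_carrier i ha)
          rw [h2.hGj] at ha1
          rcases Finset.mem_union.mp ha1 with h | h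
          · rcases Finset.mem_insert.mp h with h | h
            · exact absurd h hac
            · exact absurd (Finset.mem_singleton.mp h) had
          · exact h
    · rw [if_neg (fun h => Finset.disjoint_left.mp (T.disjointG i j hij) h hdGT),
        ← h2.hGi i hij, h1.hGi i hij]
  · rw [if_neg (fun h => Finset.disjoint_left.mp (T.disjointI j) hdGT h),
      ← h2.hI, h1.hI]
  · intro a ha a' ha'
    rw [← h2.hb _ (hmap a ha) _ (hmap a' ha'), hswap_inv a ha a' ha']
    exact h1.hb a ha a' ha'

open WovenBasedMatrix in
lemma overlapII_one {T T1 T2 : WovenBasedMatrix α H n} {p c d : α}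
    (hpc : p ≠ c) (hcd : c ≠ d) (hpd : p ≠ d)
    (h1 : AddI T T1 {p, c}) (h2 : AddI T2 T1 {c, d})
    (hsum1 : ∀ a ∈ T1.carrier, T1.b p a + T1.b c a = 0)
    (hsum2 : ∀ a ∈ T1.carrier, T1.b c a + T1.b d a = 0) :
    IsoRel T T2 := by
  have hpT : p ∉ T.carrier := h1.fresh p (by simp)
  have hcT : c ∉ T.carrier := h1.fresh c (by simp)
  have hcT2 : c ∉ T2.carrier := h2.fresh c (by simp)
  have hdT2 : d ∉ T2.carrier := h2.fresh d (by simp)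
  have hdI1 : d ∈ T1.I := h2.S_subset (show d ∈ ({c, d} : Finset α) by simp)
  have hpI1 : p ∈ T1.I := h1.S_subset (show p ∈ ({p, c} : Finset α) by simp)
  have hdIT : d ∈ T.I := by
    have := hdI1
    rw [h1.hI] at this
    rcases Finset.mem_union.mp this with h | h
    · rcases Finset.mem_insert.mp h with h | h
      · exact absurd h.symm hpd
      · exact absurd (Finset.mem_singleton.mp h).symm hcd
    · exact h
  have hpI2 : p ∈ T2.I := by
    have := hpI1
    rw [h2.hI] at this
    rcases Finset.mem_union.mp this with h | h
    · rcases Finset.mem_insert.mp h with h | h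
      · exact absurd h hpc
      · exact absurd (Finset.mem_singleton.mp h) hpd
    · exact h
  have hp1 : p ∈ T1.carrier := T1.I_subset_carrier hpI1
  have hd1 : d ∈ T1.carrier := T1.I_subset_carrier hdI1
  have hkey : ∀ x ∈ T1.carrier, T1.b p x = T1.b d x := by
    intro x hx
    have e1 : T1.b p x = -T1.b c x := eq_neg_of_add_eq_zero_left (hsum1 x hx)
    have e2 : T1.b d x = -T1.b c x := eq_neg_of_add_eq_zero_right (hsum2 x hx)
    exact e1.trans e2.symm
  have hkey2 : ∀ x ∈ T1.carrier, T1.b x p = T1.b x d := by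
    intro x hx
    rw [T1.skew x hx p hp1, T1.skew x hx d hd1, hkey x hx]
  have hmap : ∀ a ∈ T.carrier, Equiv.swap d p a ∈ T2.carrier := by
    intro a ha
    by_cases had : a = d
    · subst had
      rw [Equiv.swap_apply_left]
      exact T2.I_subset_carrier hpI2
    · have hap : a ≠ p := fun h => hpT (h ▸ ha)
      rw [Equiv.swap_apply_of_ne_of_ne had hap]
      have h1a : a ∈ T1.carrier := h1.carrier_subset ha
      rw [h2.carrier_eq] at h1a
      refine (Finset.mem_union.mp h1a).resolve_left fun hS => ?_
      rcases Finset.mem_insert.mp hS with rfl | hS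
      · exact hcT ha
      · exact had (Finset.mem_singleton.mp hS)
  have hswap_inv : ∀ a ∈ T.carrier, ∀ a' ∈ T.carrier,
      T1.b (Equiv.swap d p a) (Equiv.swap d p a') = T1.b a a' := by
    intro a ha a' ha'
    have ha1 : a ∈ T1.carrier := h1.carrier_subset ha
    have ha1' : a' ∈ T1.carrier := h1.carrier_subset ha'
    have hap : a ≠ p := fun h => hpT (h ▸ ha)
    have hap' : a' ≠ p := fun h => hpT (h ▸ ha')
    by_cases had : a = d
    · by_cases had' : a' = d
      · rw [had, had', Equiv.swap_apply_left, T1.diag p hp1, T1.diag d hd1]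
      · rw [had, Equiv.swap_apply_left, Equiv.swap_apply_of_ne_of_ne had' hap',
          hkey a' ha1']
    · rw [Equiv.swap_apply_of_ne_of_ne had hap]
      by_cases had' : a' = d
      · rw [had', Equiv.swap_apply_left, hkey2 a ha1]
      · rw [Equiv.swap_apply_of_ne_of_ne had' hap']
  refine isoRel_of_swap d p hdT2 hpT (h2.hs.symm.trans h1.hs) ?_ ?_ ?_
  · intro i
    rw [if_neg (fun h => Finset.disjoint_left.mp (T.disjointI i) h hdIT),
      ← congrFun h2.hG i, congrFun h1.hG i]
  · rw [if_pos hdIT]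
    ext a
    simp only [Finset.mem_insert, Finset.mem_erase]
    constructor
    · intro ha
      have ha1 : a ∈ T1.I := by rw [h2.hI]; exact Finset.mem_union_right _ ha
      have hac : a ≠ c := fun h => hcT2 (h ▸ T2.I_subset_carrier ha)
      have had : a ≠ d := fun h => hdT2 (h ▸ T2.I_subset_carrier ha)
      rw [h1.hI] at ha1
      rcases Finset.mem_union.mp ha1 with h | h
      · rcases Finset.mem_insert.mp h with rfl | h
        · exact Or.inl rfl
        · exact absurd (Finset.mem_singleton.mp h) hac
      · exact Or.inr ⟨had, h⟩
    · rintro (rfl | ⟨had, ha⟩)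
      · exact hpI2
      · have ha1 : a ∈ T1.I := by rw [h1.hI]; exact Finset.mem_union_right _ ha
        have hac : a ≠ c := fun h => hcT (h ▸ T.I_subset_carrier ha)
        rw [h2.hI] at ha1
        rcases Finset.mem_union.mp ha1 with h | h
        · rcases Finset.mem_insert.mp h with h | h
          · exact absurd h hac
          · exact absurd (Finset.mem_singleton.mp h) had
        · exact h
  · intro a ha a' ha'
    rw [← h2.hb _ (hmap a ha) _ (hmap a' ha'), hswap_inv a ha a' ha']
    exact h1.hb a ha a' ha'
lemma mem_of_carrier_eq {T T1 : WovenBasedMatrix α H n} {S : Finset α}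
    (hc : T1.carrier = S ∪ T.carrier) {x : α} (hx : x ∈ T1.carrier) (hxS : x ∉ S) :
    x ∈ T.carrier := by
  rw [hc] at hx
  exact (Finset.mem_union.mp hx).resolve_left hxS

lemma AddG.S_carrier {T T' : WovenBasedMatrix α H n} {j : Fin n} {S : Finset α}
    (h : AddG T T' j S) : S ⊆ T'.carrier :=
  h.S_subset.trans (T'.G_subset_carrier j)

lemma AddI.S_carrier {T T' : WovenBasedMatrix α H n} {S : Finset α}
    (h : AddI T T' S) : S ⊆ T'.carrier :=
  h.S_subset.trans T'.I_subset_carrier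

lemma extRel1_down {T3 T T1 : WovenBasedMatrix α H n} {j : Fin n} {g : α}
    (h : AddG T3 T j {g})
    (hsub : T.carrier ⊆ T1.carrier) (hg : g ∈ T.carrier)
    (hb : ∀ a ∈ T.carrier, ∀ a' ∈ T.carrier, T1.b a a' = T.b a a')
    (hside : ∀ a ∈ T1.carrier, T1.b g a = 0) : ExtRel1 T3 T :=
  extRel1_iff.mpr ⟨j, g, h, fun a ha =>
    (hb g hg a ha).symm.trans (hside a (hsub ha))⟩

lemma extRel2_down {T3 T T1 : WovenBasedMatrix α H n} {j : Fin n} {g : α}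
    (h : AddG T3 T j {g})
    (hsub : T.carrier ⊆ T1.carrier) (hg : g ∈ T.carrier) (hs : T1.s = T.s)
    (hb : ∀ a ∈ T.carrier, ∀ a' ∈ T.carrier, T1.b a a' = T.b a a')
    (hside : ∀ a ∈ T1.carrier, T1.b g a = T1.b (T1.s j) a) : ExtRel2 T3 T :=
  extRel2_iff.mpr ⟨j, g, h, fun a ha => by
    rw [← hb g hg a ha, ← hb _ (T.s_mem_carrier j) a ha, ← hs]
    exact hside a (hsub ha)⟩

lemma extRel3_down {T3 T T1 : WovenBasedMatrix α H n} {j : Fin n} {g1 g2 : α}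
    (hne : g1 ≠ g2) (h : AddG T3 T j {g1, g2})
    (hsub : T.carrier ⊆ T1.carrier) (hg1 : g1 ∈ T.carrier) (hg2 : g2 ∈ T.carrier)
    (hs : T1.s = T.s)
    (hb : ∀ a ∈ T.carrier, ∀ a' ∈ T.carrier, T1.b a a' = T.b a a')
    (hside : ∀ a ∈ T1.carrier, T1.b g1 a + T1.b g2 a = T1.b (T1.s j) a) :
    ExtRel3 T3 T :=
  extRel3_iff.mpr ⟨j, g1, g2, hne, h, fun a ha => by
    rw [← hb g1 hg1 a ha, ← hb g2 hg2 a ha, ← hb _ (T.s_mem_carrier j) a ha, ← hs]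
    exact hside a (hsub ha)⟩

lemma extRel4_down {T3 T T1 : WovenBasedMatrix α H n} {x1 x2 : α}
    (hne : x1 ≠ x2) (h : AddI T3 T {x1, x2})
    (hsub : T.carrier ⊆ T1.carrier) (hx1 : x1 ∈ T.carrier) (hx2 : x2 ∈ T.carrier)
    (hb : ∀ a ∈ T.carrier, ∀ a' ∈ T.carrier, T1.b a a' = T.b a a')
    (hside : ∀ a ∈ T1.carrier, T1.b x1 a + T1.b x2 a = 0) : ExtRel4 T3 T :=
  extRel4_iff.mpr ⟨x1, x2, hne, h, fun a ha => by
    rw [← hb x1 hx1 a ha, ← hb x2 hx2 a ha]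
    exact hside a (hsub ha)⟩
/-- a composition `M_j⁻¹ ∘ M_i` of an elementary extension followed by an
inverse elementary extension can be replaced by a sequence in which all inverse
extensions apply before extensions: a single extension, a single inverse extension, an
inverse extension followed by an extension, or an isomorphism. -/
theorem extension_inverse_reorder
    {α : Type u} {H : Type v} [DecidableEq α] [AddCommGroup H] {n : ℕ}
    (T T1 T2 : WovenBasedMatrix α H n)
    (h1 : ExtRel T T1) (h2 : ExtRel T2 T1) :
    ExtRel T T2 ∨ ExtRel T2 T ∨
      (∃ T3 : WovenBasedMatrix α H n, ExtRel T3 T ∧ ExtRel T3 T2) ∨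
      IsoRel T T2 := by
  rcases h1 with h1 | h1 | h1 | h1
  · -- A1 : M1 extension
    obtain ⟨j, g, hA, hs1⟩ := extRel1_iff.mp h1
    rcases h2 with h2 | h2 | h2 | h2
    · -- B1
      obtain ⟨j', g', hB, hs2⟩ := extRel1_iff.mp h2
      by_cases hgg : g = g'
      · subst hgg
        exact Or.inr (Or.inr (Or.inr (iso_of_addG_addG hA hB ⟨g, Finset.mem_singleton_self g⟩)))
      · obtain ⟨T3, -, hBA, hAB⟩ := diamondGG hA hB (by simpa using hgg)
        refine Or.inr (Or.inr (Or.inl ⟨T3, Or.inl ?_, Or.inl ?_⟩))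
        · exact extRel1_down hBA hA.carrier_subset
            (mem_of_carrier_eq hA.carrier_eq
              (hB.S_carrier (Finset.mem_singleton_self g'))
              (by simpa using fun h => hgg h.symm)) hA.hb hs2
        · exact extRel1_down hAB hB.carrier_subset
            (mem_of_carrier_eq hB.carrier_eq
              (hA.S_carrier (Finset.mem_singleton_self g)) (by simpa using hgg)) hB.hb hs1
    · -- B2
      obtain ⟨j', g', hB, hs2⟩ := extRel2_iff.mp h2
      by_cases hgg : g = g'
      · subst hgg
        exact Or.inr (Or.inr (Or.inr (iso_of_addG_addG hA hB ⟨g, Finset.mem_singleton_self g⟩)))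
      · obtain ⟨T3, -, hBA, hAB⟩ := diamondGG hA hB (by simpa using hgg)
        refine Or.inr (Or.inr (Or.inl ⟨T3, Or.inr (Or.inl ?_), Or.inl ?_⟩))
        · exact extRel2_down hBA hA.carrier_subset
            (mem_of_carrier_eq hA.carrier_eq
              (hB.S_carrier (Finset.mem_singleton_self g'))
              (by simpa using fun h => hgg h.symm)) hA.hs hA.hb hs2
        · exact extRel1_down hAB hB.carrier_subset
            (mem_of_carrier_eq hB.carrier_eq
              (hA.S_carrier (Finset.mem_singleton_self g)) (by simpa using hgg)) hB.hb hs1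
    · -- B3
      obtain ⟨j', c1, c2, hne', hB, hs2⟩ := extRel3_iff.mp h2
      by_cases hg : g = c1 ∨ g = c2
      · rcases hg with rfl | rfl
        · -- g = c1
          have hover := single_pair_overlap hne' hA hB
          refine Or.inr (Or.inl (Or.inr (Or.inl (extRel2_down hover hA.carrier_subset
            (mem_of_carrier_eq hA.carrier_eq
              (hB.S_carrier (by simp))
              (by simpa using hne'.symm)) hA.hs hA.hb ?_))))
          intro a ha
          have h' := hs2 a ha
          rw [hs1 a ha, zero_add] at h'
          exact h'
        · -- g = c2
          rw [Finset.pair_comm] at hB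
          have hover := single_pair_overlap hne'.symm hA hB
          refine Or.inr (Or.inl (Or.inr (Or.inl (extRel2_down hover hA.carrier_subset
            (mem_of_carrier_eq hA.carrier_eq
              (hB.S_carrier (by simp))
              (by simpa using hne')) hA.hs hA.hb ?_))))
          intro a ha
          have h' := hs2 a ha
          rw [hs1 a ha, add_zero] at h'
          exact h'
      · push_neg at hg
        obtain ⟨T3, -, hBA, hAB⟩ := diamondGG hA hB
          (by intro a ha hb; simp only [Finset.mem_singleton] at ha; subst ha
              simp only [Finset.mem_insert, Finset.mem_singleton] at hb
              exact (not_or.mpr hg) hb)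
        refine Or.inr (Or.inr (Or.inl ⟨T3, Or.inr (Or.inr (Or.inl ?_)), Or.inl ?_⟩))
        · exact extRel3_down hne' hBA hA.carrier_subset
            (mem_of_carrier_eq hA.carrier_eq (hB.S_carrier (by simp))
              (by simpa using fun h => hg.1 h.symm))
            (mem_of_carrier_eq hA.carrier_eq (hB.S_carrier (by simp))
              (by simpa using fun h => hg.2 h.symm)) hA.hs hA.hb hs2
        · exact extRel1_down hAB hB.carrier_subset
            (mem_of_carrier_eq hB.carrier_eq (hA.S_carrier (by simp))
              (by simpa using hg)) hB.hb hs1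
    · -- B4
      obtain ⟨x1, x2, hne', hB, hs2⟩ := extRel4_iff.mp h2
      have hGI : ∀ x ∈ T1.I, x ∉ ({g} : Finset α) := by
        intro x hx hmem
        rw [Finset.mem_singleton.mp hmem] at hx
        exact Finset.disjoint_left.mp (T1.disjointI j)
          (hA.S_subset (Finset.mem_singleton_self g)) hx
      obtain ⟨T3, -, hBA, hAB⟩ := diamondGI hA hB
      refine Or.inr (Or.inr (Or.inl ⟨T3, Or.inr (Or.inr (Or.inr ?_)), Or.inl ?_⟩))
      · exact extRel4_down hne' hBA hA.carrier_subset
          (mem_of_carrier_eq hA.carrier_eq (hB.S_carrier (by simp))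
            (hGI x1 (hB.S_subset (by simp))))
          (mem_of_carrier_eq hA.carrier_eq (hB.S_carrier (by simp))
            (hGI x2 (hB.S_subset (by simp)))) hA.hb hs2
      · refine extRel1_down hAB hB.carrier_subset
          (mem_of_carrier_eq hB.carrier_eq (hA.S_carrier (by simp)) ?_) hB.hb hs1
        intro hmem
        simp only [Finset.mem_insert, Finset.mem_singleton] at hmem
        rcases hmem with rfl | rfl
        · exact Finset.disjoint_left.mp (T1.disjointI j)
            (hA.S_subset (Finset.mem_singleton_self g)) (hB.S_subset (by simp))
        · exact Finset.disjoint_left.mp (T1.disjointI j)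
            (hA.S_subset (Finset.mem_singleton_self g)) (hB.S_subset (by simp))
  · -- A2 : M2 extension
    obtain ⟨j, g, hA, hs1⟩ := extRel2_iff.mp h1
    rcases h2 with h2 | h2 | h2 | h2
    · -- B1
      obtain ⟨j', g', hB, hs2⟩ := extRel1_iff.mp h2
      by_cases hgg : g = g'
      · subst hgg
        exact Or.inr (Or.inr (Or.inr (iso_of_addG_addG hA hB ⟨g, Finset.mem_singleton_self g⟩)))
      · obtain ⟨T3, -, hBA, hAB⟩ := diamondGG hA hB (by simpa using hgg)
        refine Or.inr (Or.inr (Or.inl ⟨T3, Or.inl ?_, Or.inr (Or.inl ?_)⟩))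
        · exact extRel1_down hBA hA.carrier_subset
            (mem_of_carrier_eq hA.carrier_eq
              (hB.S_carrier (Finset.mem_singleton_self g'))
              (by simpa using fun h => hgg h.symm)) hA.hb hs2
        · exact extRel2_down hAB hB.carrier_subset
            (mem_of_carrier_eq hB.carrier_eq
              (hA.S_carrier (Finset.mem_singleton_self g)) (by simpa using hgg))
            hB.hs hB.hb hs1
    · -- B2
      obtain ⟨j', g', hB, hs2⟩ := extRel2_iff.mp h2
      by_cases hgg : g = g'
      · subst hgg
        exact Or.inr (Or.inr (Or.inr (iso_of_addG_addG hA hB ⟨g, Finset.mem_singleton_self g⟩)))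
      · obtain ⟨T3, -, hBA, hAB⟩ := diamondGG hA hB (by simpa using hgg)
        refine Or.inr (Or.inr (Or.inl ⟨T3, Or.inr (Or.inl ?_), Or.inr (Or.inl ?_)⟩))
        · exact extRel2_down hBA hA.carrier_subset
            (mem_of_carrier_eq hA.carrier_eq
              (hB.S_carrier (Finset.mem_singleton_self g'))
              (by simpa using fun h => hgg h.symm)) hA.hs hA.hb hs2
        · exact extRel2_down hAB hB.carrier_subset
            (mem_of_carrier_eq hB.carrier_eq
              (hA.S_carrier (Finset.mem_singleton_self g)) (by simpa using hgg))
            hB.hs hB.hb hs1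
    · -- B3
      obtain ⟨j', c1, c2, hne', hB, hs2⟩ := extRel3_iff.mp h2
      by_cases hg : g = c1 ∨ g = c2
      · have hjj : j = j' := by
          by_contra hcon
          refine Finset.disjoint_left.mp (T1.disjointG j j' hcon)
            (hA.S_subset (Finset.mem_singleton_self g)) (hB.S_subset ?_)
          rcases hg with rfl | rfl
          · simp
          · simp
        subst hjj
        rcases hg with rfl | rfl
        · -- g = c1
          have hover := single_pair_overlap hne' hA hB
          refine Or.inr (Or.inl (Or.inl (extRel1_down hover hA.carrier_subset
            (mem_of_carrier_eq hA.carrier_eq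
              (hB.S_carrier (by simp))
              (by simpa using hne'.symm)) hA.hb ?_)))
          intro a ha
          have h' := hs2 a ha
          rw [hs1 a ha] at h'
          exact (add_eq_left).mp h'
        · -- g = c2
          rw [Finset.pair_comm] at hB
          have hover := single_pair_overlap hne'.symm hA hB
          refine Or.inr (Or.inl (Or.inl (extRel1_down hover hA.carrier_subset
            (mem_of_carrier_eq hA.carrier_eq
              (hB.S_carrier (by simp))
              (by simpa using hne')) hA.hb ?_)))
          intro a ha
          have h' := hs2 a ha
          rw [hs1 a ha] at h'
          exact (add_eq_right).mp h'
      · push_neg at hg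
        obtain ⟨T3, -, hBA, hAB⟩ := diamondGG hA hB
          (by intro a ha hb; simp only [Finset.mem_singleton] at ha; subst ha
              simp only [Finset.mem_insert, Finset.mem_singleton] at hb
              exact (not_or.mpr hg) hb)
        refine Or.inr (Or.inr (Or.inl ⟨T3, Or.inr (Or.inr (Or.inl ?_)), Or.inr (Or.inl ?_)⟩))
        · exact extRel3_down hne' hBA hA.carrier_subset
            (mem_of_carrier_eq hA.carrier_eq (hB.S_carrier (by simp))
              (by simpa using fun h => hg.1 h.symm))
            (mem_of_carrier_eq hA.carrier_eq (hB.S_carrier (by simp))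
              (by simpa using fun h => hg.2 h.symm)) hA.hs hA.hb hs2
        · exact extRel2_down hAB hB.carrier_subset
            (mem_of_carrier_eq hB.carrier_eq (hA.S_carrier (by simp))
              (by simpa using hg)) hB.hs hB.hb hs1
    · -- B4
      obtain ⟨x1, x2, hne', hB, hs2⟩ := extRel4_iff.mp h2
      have hGI : ∀ x ∈ T1.I, x ∉ ({g} : Finset α) := by
        intro x hx hmem
        rw [Finset.mem_singleton.mp hmem] at hx
        exact Finset.disjoint_left.mp (T1.disjointI j)
          (hA.S_subset (Finset.mem_singleton_self g)) hx
      obtain ⟨T3, -, hBA, hAB⟩ := diamondGI hA hB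
      refine Or.inr (Or.inr (Or.inl ⟨T3, Or.inr (Or.inr (Or.inr ?_)), Or.inr (Or.inl ?_)⟩))
      · exact extRel4_down hne' hBA hA.carrier_subset
          (mem_of_carrier_eq hA.carrier_eq (hB.S_carrier (by simp))
            (hGI x1 (hB.S_subset (by simp))))
          (mem_of_carrier_eq hA.carrier_eq (hB.S_carrier (by simp))
            (hGI x2 (hB.S_subset (by simp)))) hA.hb hs2
      · refine extRel2_down hAB hB.carrier_subset
          (mem_of_carrier_eq hB.carrier_eq (hA.S_carrier (by simp)) ?_) hB.hs hB.hb hs1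
        intro hmem
        simp only [Finset.mem_insert, Finset.mem_singleton] at hmem
        rcases hmem with rfl | rfl
        · exact Finset.disjoint_left.mp (T1.disjointI j)
            (hA.S_subset (Finset.mem_singleton_self g)) (hB.S_subset (by simp))
        · exact Finset.disjoint_left.mp (T1.disjointI j)
            (hA.S_subset (Finset.mem_singleton_self g)) (hB.S_subset (by simp))
  · -- A3 : M3 extension
    obtain ⟨j, g1, g2, hne, hA, hs1⟩ := extRel3_iff.mp h1
    rcases h2 with h2 | h2 | h2 | h2
    · -- B1
      obtain ⟨j', g', hB, hs2⟩ := extRel1_iff.mp h2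
      by_cases hc : g' = g1 ∨ g' = g2
      · have hjj : j = j' := by
          by_contra hcon
          refine Finset.disjoint_left.mp (T1.disjointG j j' hcon)
            (hA.S_subset ?_) (hB.S_subset (Finset.mem_singleton_self g'))
          rcases hc with rfl | rfl
          · simp
          · simp
        subst hjj
        rcases hc with rfl | rfl
        · -- g' = g1
          have hover := single_pair_overlap hne hB hA
          refine Or.inl (Or.inr (Or.inl (extRel2_down hover hB.carrier_subset
            (mem_of_carrier_eq hB.carrier_eq
              (hA.S_carrier (by simp))
              (by simpa using hne.symm)) hB.hs hB.hb ?_)))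
          intro a ha
          have h' := hs1 a ha
          rw [hs2 a ha, zero_add] at h'
          exact h'
        · -- g' = g2
          rw [Finset.pair_comm] at hA
          have hover := single_pair_overlap hne.symm hB hA
          refine Or.inl (Or.inr (Or.inl (extRel2_down hover hB.carrier_subset
            (mem_of_carrier_eq hB.carrier_eq
              (hA.S_carrier (by simp))
              (by simpa using hne)) hB.hs hB.hb ?_)))
          intro a ha
          have h' := hs1 a ha
          rw [hs2 a ha, add_zero] at h'
          exact h'
      · push_neg at hc
        obtain ⟨T3, -, hBA, hAB⟩ := diamondGG hA hB
          (by intro a ha hb; simp only [Finset.mem_singleton] at hb; subst hb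
              simp only [Finset.mem_insert, Finset.mem_singleton] at ha
              rcases ha with h | h
              · exact hc.1 h
              · exact hc.2 h)
        refine Or.inr (Or.inr (Or.inl ⟨T3, Or.inl ?_, Or.inr (Or.inr (Or.inl ?_))⟩))
        · exact extRel1_down hBA hA.carrier_subset
            (mem_of_carrier_eq hA.carrier_eq
              (hB.S_carrier (Finset.mem_singleton_self g'))
              (by simpa using hc)) hA.hb hs2
        · exact extRel3_down hne hAB hB.carrier_subset
            (mem_of_carrier_eq hB.carrier_eq (hA.S_carrier (by simp))
              (by simpa using fun h => hc.1 h.symm))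
            (mem_of_carrier_eq hB.carrier_eq (hA.S_carrier (by simp))
              (by simpa using fun h => hc.2 h.symm)) hB.hs hB.hb hs1
    · -- B2
      obtain ⟨j', g', hB, hs2⟩ := extRel2_iff.mp h2
      by_cases hc : g' = g1 ∨ g' = g2
      · have hjj : j = j' := by
          by_contra hcon
          refine Finset.disjoint_left.mp (T1.disjointG j j' hcon)
            (hA.S_subset ?_) (hB.S_subset (Finset.mem_singleton_self g'))
          rcases hc with rfl | rfl
          · simp
          · simp
        subst hjj
        rcases hc with rfl | rfl
        · -- g' = g1
          have hover := single_pair_overlap hne hB hA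
          refine Or.inl (Or.inl (extRel1_down hover hB.carrier_subset
            (mem_of_carrier_eq hB.carrier_eq
              (hA.S_carrier (by simp))
              (by simpa using hne.symm)) hB.hb ?_))
          intro a ha
          have h' := hs1 a ha
          rw [hs2 a ha] at h'
          exact (add_eq_left).mp h'
        · -- g' = g2
          rw [Finset.pair_comm] at hA
          have hover := single_pair_overlap hne.symm hB hA
          refine Or.inl (Or.inl (extRel1_down hover hB.carrier_subset
            (mem_of_carrier_eq hB.carrier_eq
              (hA.S_carrier (by simp))
              (by simpa using hne)) hB.hb ?_))
          intro a ha
          have h' := hs1 a ha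
          rw [hs2 a ha] at h'
          exact (add_eq_right).mp h'
      · push_neg at hc
        obtain ⟨T3, -, hBA, hAB⟩ := diamondGG hA hB
          (by intro a ha hb; simp only [Finset.mem_singleton] at hb; subst hb
              simp only [Finset.mem_insert, Finset.mem_singleton] at ha
              rcases ha with h | h
              · exact hc.1 h
              · exact hc.2 h)
        refine Or.inr (Or.inr (Or.inl ⟨T3, Or.inr (Or.inl ?_), Or.inr (Or.inr (Or.inl ?_))⟩))
        · exact extRel2_down hBA hA.carrier_subset
            (mem_of_carrier_eq hA.carrier_eq
              (hB.S_carrier (Finset.mem_singleton_self g'))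
              (by simpa using hc)) hA.hs hA.hb hs2
        · exact extRel3_down hne hAB hB.carrier_subset
            (mem_of_carrier_eq hB.carrier_eq (hA.S_carrier (by simp))
              (by simpa using fun h => hc.1 h.symm))
            (mem_of_carrier_eq hB.carrier_eq (hA.S_carrier (by simp))
              (by simpa using fun h => hc.2 h.symm)) hB.hs hB.hb hs1
    · -- B3
      obtain ⟨j', c1, c2, hne', hB, hs2⟩ := extRel3_iff.mp h2
      by_cases h11 : g1 = c1 ∨ g1 = c2
      · by_cases h22 : g2 = c1 ∨ g2 = c2
        · -- full overlap : iso
          have hSS : ({c1, c2} : Finset α) = {g1, g2} := by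
            rcases h11 with h11 | h11 <;> rcases h22 with h22 | h22
            · exact absurd (h11.trans h22.symm) hne
            · rw [h11, h22]
            · rw [h11, h22, Finset.pair_comm]
            · exact absurd (h11.trans h22.symm) hne
          rw [hSS] at hB
          exact Or.inr (Or.inr (Or.inr (iso_of_addG_addG hA hB ⟨g1, by simp⟩)))
        · -- g1 shared, g2 not
          push_neg at h22
          rw [Finset.pair_comm g1 g2] at hA
          have hsum1 : ∀ a ∈ T1.carrier, T1.b g2 a + T1.b g1 a = T1.b (T1.s j) a := by
            intro a ha
            rw [add_comm]
            exact hs1 a ha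
          rcases h11 with rfl | h11
          · -- g1 = c1
            exact Or.inr (Or.inr (Or.inr (overlapGG_one hne.symm hne' h22.2 hA hB hsum1 hs2)))
          · -- g1 = c2
            subst h11
            rw [Finset.pair_comm c1 g1] at hB
            have hsum2 : ∀ a ∈ T1.carrier, T1.b g1 a + T1.b c1 a = T1.b (T1.s j') a := by
              intro a ha
              rw [add_comm]
              exact hs2 a ha
            exact Or.inr (Or.inr (Or.inr
              (overlapGG_one hne.symm hne'.symm h22.1 hA hB hsum1 hsum2)))
      · by_cases h22 : g2 = c1 ∨ g2 = c2
        · -- g2 shared, g1 not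
          push_neg at h11
          rcases h22 with rfl | h22
          · exact Or.inr (Or.inr (Or.inr (overlapGG_one hne hne' h11.2 hA hB hs1 hs2)))
          · subst h22
            rw [Finset.pair_comm c1 g2] at hB
            have hsum2 : ∀ a ∈ T1.carrier, T1.b g2 a + T1.b c1 a = T1.b (T1.s j') a := by
              intro a ha
              rw [add_comm]
              exact hs2 a ha
            exact Or.inr (Or.inr (Or.inr (overlapGG_one hne hne'.symm h11.1 hA hB hs1 hsum2)))
        · -- disjoint
          push_neg at h11
          push_neg at h22
          obtain ⟨T3, -, hBA, hAB⟩ := diamondGG hA hB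
            (by intro a ha hb
                simp only [Finset.mem_insert, Finset.mem_singleton] at ha hb
                rcases ha with rfl | rfl
                · exact (not_or.mpr h11) hb
                · exact (not_or.mpr h22) hb)
          refine Or.inr (Or.inr (Or.inl ⟨T3, Or.inr (Or.inr (Or.inl ?_)),
            Or.inr (Or.inr (Or.inl ?_))⟩))
          · exact extRel3_down hne' hBA hA.carrier_subset
              (mem_of_carrier_eq hA.carrier_eq (hB.S_carrier (by simp))
                (by simp only [Finset.mem_insert, Finset.mem_singleton, not_or]
                    exact ⟨fun h => h11.1 h.symm, fun h => h22.1 h.symm⟩))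
              (mem_of_carrier_eq hA.carrier_eq (hB.S_carrier (by simp))
                (by simp only [Finset.mem_insert, Finset.mem_singleton, not_or]
                    exact ⟨fun h => h11.2 h.symm, fun h => h22.2 h.symm⟩))
              hA.hs hA.hb hs2
          · exact extRel3_down hne hAB hB.carrier_subset
              (mem_of_carrier_eq hB.carrier_eq (hA.S_carrier (by simp))
                (by simpa using h11))
              (mem_of_carrier_eq hB.carrier_eq (hA.S_carrier (by simp))
                (by simpa using h22))
              hB.hs hB.hb hs1
    · -- B4
      obtain ⟨x1, x2, hne', hB, hs2⟩ := extRel4_iff.mp h2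
      have hGI : ∀ x ∈ T1.I, x ∉ ({g1, g2} : Finset α) := by
        intro x hx hmem
        exact Finset.disjoint_left.mp (T1.disjointI j) (hA.S_subset hmem) hx
      have hIG : ∀ x ∈ T1.G j, x ∉ ({x1, x2} : Finset α) := by
        intro x hx hmem
        exact Finset.disjoint_left.mp (T1.disjointI j) hx (hB.S_subset hmem)
      obtain ⟨T3, -, hBA, hAB⟩ := diamondGI hA hB
      refine Or.inr (Or.inr (Or.inl ⟨T3, Or.inr (Or.inr (Or.inr ?_)),
        Or.inr (Or.inr (Or.inl ?_))⟩))
      · exact extRel4_down hne' hBA hA.carrier_subset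
          (mem_of_carrier_eq hA.carrier_eq (hB.S_carrier (by simp))
            (hGI x1 (hB.S_subset (by simp))))
          (mem_of_carrier_eq hA.carrier_eq (hB.S_carrier (by simp))
            (hGI x2 (hB.S_subset (by simp)))) hA.hb hs2
      · exact extRel3_down hne hAB hB.carrier_subset
          (mem_of_carrier_eq hB.carrier_eq (hA.S_carrier (by simp))
            (hIG g1 (hA.S_subset (by simp))))
          (mem_of_carrier_eq hB.carrier_eq (hA.S_carrier (by simp))
            (hIG g2 (hA.S_subset (by simp)))) hB.hs hB.hb hs1
  · -- A4 : M4 extension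
    obtain ⟨x1, x2, hne, hA, hs1⟩ := extRel4_iff.mp h1
    rcases h2 with h2 | h2 | h2 | h2
    · -- B1
      obtain ⟨j', g', hB, hs2⟩ := extRel1_iff.mp h2
      have hIG : ∀ x ∈ T1.I, x ∉ ({g'} : Finset α) := by
        intro x hx hmem
        rw [Finset.mem_singleton.mp hmem] at hx
        exact Finset.disjoint_left.mp (T1.disjointI j')
          (hB.S_subset (Finset.mem_singleton_self g')) hx
      obtain ⟨T3, -, hBA, hAB⟩ := diamondIG hA hB
      refine Or.inr (Or.inr (Or.inl ⟨T3, Or.inl ?_, Or.inr (Or.inr (Or.inr ?_))⟩))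
      · exact extRel1_down hBA hA.carrier_subset
          (mem_of_carrier_eq hA.carrier_eq
            (hB.S_carrier (Finset.mem_singleton_self g'))
            (by intro hmem
                exact hIG g' (hA.S_subset hmem) (Finset.mem_singleton_self g'))) hA.hb hs2
      · exact extRel4_down hne hAB hB.carrier_subset
          (mem_of_carrier_eq hB.carrier_eq (hA.S_carrier (by simp))
            (hIG x1 (hA.S_subset (by simp))))
          (mem_of_carrier_eq hB.carrier_eq (hA.S_carrier (by simp))
            (hIG x2 (hA.S_subset (by simp)))) hB.hb hs1
    · -- B2
      obtain ⟨j', g', hB, hs2⟩ := extRel2_iff.mp h2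
      have hIG : ∀ x ∈ T1.I, x ∉ ({g'} : Finset α) := by
        intro x hx hmem
        rw [Finset.mem_singleton.mp hmem] at hx
        exact Finset.disjoint_left.mp (T1.disjointI j')
          (hB.S_subset (Finset.mem_singleton_self g')) hx
      obtain ⟨T3, -, hBA, hAB⟩ := diamondIG hA hB
      refine Or.inr (Or.inr (Or.inl ⟨T3, Or.inr (Or.inl ?_), Or.inr (Or.inr (Or.inr ?_))⟩))
      · exact extRel2_down hBA hA.carrier_subset
          (mem_of_carrier_eq hA.carrier_eq
            (hB.S_carrier (Finset.mem_singleton_self g'))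
            (by intro hmem
                exact hIG g' (hA.S_subset hmem) (Finset.mem_singleton_self g')))
          hA.hs hA.hb hs2
      · exact extRel4_down hne hAB hB.carrier_subset
          (mem_of_carrier_eq hB.carrier_eq (hA.S_carrier (by simp))
            (hIG x1 (hA.S_subset (by simp))))
          (mem_of_carrier_eq hB.carrier_eq (hA.S_carrier (by simp))
            (hIG x2 (hA.S_subset (by simp)))) hB.hb hs1
    · -- B3
      obtain ⟨j', c1, c2, hne', hB, hs2⟩ := extRel3_iff.mp h2
      have hIG : ∀ x ∈ T1.I, x ∉ ({c1, c2} : Finset α) := by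
        intro x hx hmem
        exact Finset.disjoint_left.mp (T1.disjointI j') (hB.S_subset hmem) hx
      have hGIc : ∀ x ∈ T1.G j', x ∉ ({x1, x2} : Finset α) := by
        intro x hx hmem
        exact Finset.disjoint_left.mp (T1.disjointI j') hx (hA.S_subset hmem)
      obtain ⟨T3, -, hBA, hAB⟩ := diamondIG hA hB
      refine Or.inr (Or.inr (Or.inl ⟨T3, Or.inr (Or.inr (Or.inl ?_)),
        Or.inr (Or.inr (Or.inr ?_))⟩))
      · exact extRel3_down hne' hBA hA.carrier_subset
          (mem_of_carrier_eq hA.carrier_eq (hB.S_carrier (by simp))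
            (hGIc c1 (hB.S_subset (by simp))))
          (mem_of_carrier_eq hA.carrier_eq (hB.S_carrier (by simp))
            (hGIc c2 (hB.S_subset (by simp)))) hA.hs hA.hb hs2
      · exact extRel4_down hne hAB hB.carrier_subset
          (mem_of_carrier_eq hB.carrier_eq (hA.S_carrier (by simp))
            (hIG x1 (hA.S_subset (by simp))))
          (mem_of_carrier_eq hB.carrier_eq (hA.S_carrier (by simp))
            (hIG x2 (hA.S_subset (by simp)))) hB.hb hs1
    · -- B4
      obtain ⟨y1, y2, hne', hB, hs2⟩ := extRel4_iff.mp h2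
      by_cases h11 : x1 = y1 ∨ x1 = y2
      · by_cases h22 : x2 = y1 ∨ x2 = y2
        · have hSS : ({y1, y2} : Finset α) = {x1, x2} := by
            rcases h11 with h11 | h11 <;> rcases h22 with h22 | h22
            · exact absurd (h11.trans h22.symm) hne
            · rw [h11, h22]
            · rw [h11, h22, Finset.pair_comm]
            · exact absurd (h11.trans h22.symm) hne
          rw [hSS] at hB
          exact Or.inr (Or.inr (Or.inr (iso_of_addI_addI hA hB)))
        · push_neg at h22
          rw [Finset.pair_comm x1 x2] at hA
          have hsum1 : ∀ a ∈ T1.carrier, T1.b x2 a + T1.b x1 a = 0 := by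
            intro a ha
            rw [add_comm]
            exact hs1 a ha
          rcases h11 with rfl | h11
          · exact Or.inr (Or.inr (Or.inr (overlapII_one hne.symm hne' h22.2 hA hB hsum1 hs2)))
          · subst h11
            rw [Finset.pair_comm y1 x1] at hB
            have hsum2 : ∀ a ∈ T1.carrier, T1.b x1 a + T1.b y1 a = 0 := by
              intro a ha
              rw [add_comm]
              exact hs2 a ha
            exact Or.inr (Or.inr (Or.inr
              (overlapII_one hne.symm hne'.symm h22.1 hA hB hsum1 hsum2)))
      · by_cases h22 : x2 = y1 ∨ x2 = y2
        · push_neg at h11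
          rcases h22 with rfl | h22
          · exact Or.inr (Or.inr (Or.inr (overlapII_one hne hne' h11.2 hA hB hs1 hs2)))
          · subst h22
            rw [Finset.pair_comm y1 x2] at hB
            have hsum2 : ∀ a ∈ T1.carrier, T1.b x2 a + T1.b y1 a = 0 := by
              intro a ha
              rw [add_comm]
              exact hs2 a ha
            exact Or.inr (Or.inr (Or.inr (overlapII_one hne hne'.symm h11.1 hA hB hs1 hsum2)))
        · push_neg at h11
          push_neg at h22
          obtain ⟨T3, -, hBA, hAB⟩ := diamondII hA hB
            (by intro a ha hb
                simp only [Finset.mem_insert, Finset.mem_singleton] at ha hb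
                rcases ha with rfl | rfl
                · exact (not_or.mpr h11) hb
                · exact (not_or.mpr h22) hb)
          refine Or.inr (Or.inr (Or.inl ⟨T3, Or.inr (Or.inr (Or.inr ?_)),
            Or.inr (Or.inr (Or.inr ?_))⟩))
          · exact extRel4_down hne' hBA hA.carrier_subset
              (mem_of_carrier_eq hA.carrier_eq (hB.S_carrier (by simp))
                (by simp only [Finset.mem_insert, Finset.mem_singleton, not_or]
                    exact ⟨fun h => h11.1 h.symm, fun h => h22.1 h.symm⟩))
              (mem_of_carrier_eq hA.carrier_eq (hB.S_carrier (by simp))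
                (by simp only [Finset.mem_insert, Finset.mem_singleton, not_or]
                    exact ⟨fun h => h11.2 h.symm, fun h => h22.2 h.symm⟩))
              hA.hb hs2
          · exact extRel4_down hne hAB hB.carrier_subset
              (mem_of_carrier_eq hB.carrier_eq (hA.S_carrier (by simp))
                (by simpa using h11))
              (mem_of_carrier_eq hB.carrier_eq (hA.S_carrier (by simp))
                (by simpa using h22))
              hB.hb hs1
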